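/- Consider the TSO game in which both players are permitted to update buffer messages both before and after their own moves. If a configuration c_0 is winning for a player, then that player has a winning strategy from c_0 under which after every one of her moves the reached configuration has all buffers empty; consequently, starting from the second configuration of any play consistent with such strategies of both players, the play only visits configurations in which the total buffer content has at most one message. -/

import Mathlib

namespace TSOGames

/-- The data of a (safety) game: a partition of the configurations into those of
player A (`isA`) and those of player B, a transition relation, and final configurations. -/
structure SGame (C : Type*) where
  isA : C → Prop
  step : C → C → Prop
  final : C → Prop

namespace SGame

variable {C : Type*} (G : SGame C)

/-- The transition relation alternates between the two players' configurations. -/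
def Alternating : Prop := ∀ c c', G.step c c' → (G.isA c ↔ ¬ G.isA c')

/-- Every configuration has at least one successor. -/
def DeadlockFree : Prop := ∀ c, ∃ c', G.step c c'

/-- Final configurations belong to player A. -/
def FinalInA : Prop := ∀ c, G.final c → G.isA c

/-- An (infinite) play: consecutive configurations are related by `step`. -/
def IsPlay (ρ : ℕ → C) : Prop := ∀ i, G.step (ρ i) (ρ (i + 1))

/-- A (history-dependent) strategy `σ`, given the strict history and the current
configuration, chooses a successor; it is valid for the player owning the
configurations satisfying `own` if it always chooses an actual successor. -/
def ValidStrat (own : C → Prop) (σ : List C → C → C) : Prop :=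
  ∀ h c, own c → G.step c (σ h c)

/-- A play is consistent with the strategy `σ` of the player owning the
configurations satisfying `own` if at every such configuration the play follows `σ`. -/
def Consistent (own : C → Prop) (σ : List C → C → C) (ρ : ℕ → C) : Prop :=
  ∀ i, own (ρ i) → ρ (i + 1) = σ (List.ofFn fun j : Fin i => ρ j) (ρ i)

/-- A play is winning for player B if it visits a final configuration. -/
def BWins (ρ : ℕ → C) : Prop := ∃ i, G.final (ρ i)

/-- A play is winning for player A if it never visits a final configuration. -/
def AWinsPlay (ρ : ℕ → C) : Prop := ¬ G.BWins ρ

/-- `σ` is a winning strategy from `c0` for the player owning the configurations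
satisfying `own`, whose plays are winning when they satisfy `winPlay`:
it is valid and every play from `c0` consistent with it is winning. -/
def WinningStrat (own : C → Prop) (winPlay : (ℕ → C) → Prop)
    (σ : List C → C → C) (c0 : C) : Prop :=
  G.ValidStrat own σ ∧
    ∀ ρ : ℕ → C, ρ 0 = c0 → G.IsPlay ρ → Consistent own σ ρ → winPlay ρ

/-- The given player has a winning strategy from `c0`. -/
def Wins (own : C → Prop) (winPlay : (ℕ → C) → Prop) (c0 : C) : Prop :=
  ∃ σ, G.WinningStrat own winPlay σ c0

/-- `c0` is winning for player A. -/
def WinA (c0 : C) : Prop := G.Wins (fun c => G.isA c) G.AWinsPlay c0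

/-- `c0` is winning for player B. -/
def WinB (c0 : C) : Prop := G.Wins (fun c => ¬ G.isA c) G.BWins c0

end SGame

/-- Restriction of a game to a subset `D` of its configurations. -/
def restrictGame {C : Type*} (G : SGame C) (D : Set C) : SGame C where
  isA := G.isA
  step := fun c c' => G.step c c' ∧ c ∈ D ∧ c' ∈ D
  final := fun c => G.final c ∧ c ∈ D

/-- The winning condition on plays for the player encoded by `b` (`true` = player A,
who wins a play iff it avoids the final configurations; `false` = player B). -/
def winPlayOf {C : Type*} (G : SGame C) (b : Bool) : (ℕ → C) → Prop :=
  fun ρ => if b then ¬ G.BWins ρ else G.BWins ρ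

end TSOGames
namespace TSOGames

/-- TSO instructions: read, write, skip, and memory fence. -/
inductive Instr (X V : Type*) : Type _
  | read (x : X) (v : V)
  | write (x : X) (v : V)
  | skip
  | fence

/-- Whether an instruction is a read instruction. -/
def Instr.isRead {X V : Type*} : Instr X V → Bool
  | .read _ _ => true
  | _ => false

/-- A concurrent program: a family of processes indexed by `I`, each a transition
system over local states `S` labeled by instructions over variables `X` and values `V`. -/
structure Program (I S X V : Type*) where
  delta : I → S → Instr X V → S → Prop

/-- A TSO configuration: local states, per-process FIFO store buffers
(newest message at the head, oldest at the end), and the shared memory. -/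
structure Conf (I S X V : Type*) where
  st : I → S
  buf : I → List (X × V)
  mem : X → V

section TSO

variable {I S X V : Type*}

/-- The value of the most recent buffered write on `x`, if any
(the buffer stores the newest message first). -/
def bufVal [DecidableEq X] : List (X × V) → X → Option V
  | [], _ => none
  | (y, v) :: rest, x => if y = x then some v else bufVal rest x

/-- The value process `ι` reads from variable `x`: the most recent buffered write of
`ι` on `x` if there is one, and the memory value otherwise. -/
def readVal [DecidableEq X] (c : Conf I S X V) (ι : I) (x : X) : V :=
  (bufVal (c.buf ι) x).getD (c.mem x)

variable [DecidableEq I] [DecidableEq X]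

/-- Execution of one instruction by process `ι` under TSO semantics. -/
inductive InstrStep (P : Program I S X V) (ι : I) (instr : Instr X V) :
    Conf I S X V → Conf I S X V → Prop
  | read (c : Conf I S X V) (x : X) (v : V) (s' : S) :
      instr = Instr.read x v → P.delta ι (c.st ι) (Instr.read x v) s' →
      readVal c ι x = v →
      InstrStep P ι instr c ⟨Function.update c.st ι s', c.buf, c.mem⟩
  | write (c : Conf I S X V) (x : X) (v : V) (s' : S) :
      instr = Instr.write x v → P.delta ι (c.st ι) (Instr.write x v) s' →
      InstrStep P ι instr c
        ⟨Function.update c.st ι s', Function.update c.buf ι ((x, v) :: c.buf ι), c.mem⟩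
  | skip (c : Conf I S X V) (s' : S) :
      instr = Instr.skip → P.delta ι (c.st ι) Instr.skip s' →
      InstrStep P ι instr c ⟨Function.update c.st ι s', c.buf, c.mem⟩
  | fence (c : Conf I S X V) (s' : S) :
      instr = Instr.fence → P.delta ι (c.st ι) Instr.fence s' → c.buf ι = [] →
      InstrStep P ι instr c ⟨Function.update c.st ι s', c.buf, c.mem⟩

/-- An update step: the oldest buffered message of some process is committed to memory. -/
inductive UpdStep : Conf I S X V → Conf I S X V → Prop
  | mk (c : Conf I S X V) (ι : I) (x : X) (v : V) (w : List (X × V)) :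
      c.buf ι = w ++ [(x, v)] →
      UpdStep c ⟨c.st, Function.update c.buf ι w, Function.update c.mem x v⟩

/-- Finitely many update steps. -/
def Upds : Conf I S X V → Conf I S X V → Prop := Relation.ReflTransGen UpdStep

/-- `flush` maps every configuration `c` to the configuration `c̄` obtained by
updating all buffered messages to the memory: `c →up* c̄` and all buffers of `c̄` are empty. -/
def IsFlush (flush : Conf I S X V → Conf I S X V) : Prop :=
  ∀ c, Upds c (flush c) ∧ ∀ ι, (flush c).buf ι = []

/-- Update steps by a player, if she is allowed to perform them (otherwise nothing happens). -/
def OptUpds (allowed : Bool) (c c' : Conf I S X V) : Prop :=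
  if allowed then Upds c c' else c' = c

/-- A move of a player whose permissions to update before resp. after her move are
given by `perm`: optional updates before, one instruction, optional updates after. -/
def Move (P : Program I S X V) (perm : Bool × Bool) (c c' : Conf I S X V) : Prop :=
  ∃ c1 c2, OptUpds perm.1 c c1 ∧ (∃ ι instr, InstrStep P ι instr c1 c2) ∧
    OptUpds perm.2 c2 c'

/-- The TSO game induced by a program `P`, update permissions
`permA`/`permB` = (may update before her move, may update after her move)
for players A and B, and a set `SF` of final local states. Game configurations are
TSO configurations annotated by `true` (player A's) or `false` (player B's). -/
def tsoGame (P : Program I S X V) (permA permB : Bool × Bool) (SF : Set S) :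
    SGame (Conf I S X V × Bool) where
  isA := fun c => c.2 = true
  step := fun c c' =>
    (c.2 = true ∧ c'.2 = false ∧ Move P permA c.1 c'.1) ∨
    (c.2 = false ∧ c'.2 = true ∧ Move P permB c.1 c'.1)
  final := fun c => c.2 = true ∧ ∃ ι, c.1.st ι ∈ SF

/-- The configurations owned by the player encoded by `b` (`true` = player A). -/
def ownOf (b : Bool) : Conf I S X V × Bool → Prop := fun c => c.2 = b

/-- The total number of buffered messages of a configuration. -/
def totalBuf [Fintype I] (c : Conf I S X V) : ℕ := ∑ ι, (c.buf ι).length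

end TSO

end TSOGames
namespace TSOGames
set_option linter.unusedSectionVars false

section AuxFlush

variable {I S X V : Type*} [DecidableEq I] [DecidableEq X]

/-- Memory after committing the buffer `w` (newest first, oldest last). -/
def flushMem (w : List (X × V)) (m : X → V) : X → V :=
  w.foldr (fun p m => Function.update m p.1 p.2) m

/-- Flush the whole buffer of process `ι`. -/
def flushProc (c : Conf I S X V) (ι : I) : Conf I S X V :=
  ⟨c.st, Function.update c.buf ι [], flushMem (c.buf ι) c.mem⟩

lemma upds_flush_aux (ι : I) (w : List (X × V)) :
    ∀ c : Conf I S X V, c.buf ι = w →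
      Upds c ⟨c.st, Function.update c.buf ι [], flushMem w c.mem⟩ := by
  induction w using List.reverseRecOn with
  | nil =>
    intro c h
    have h1 : Function.update c.buf ι [] = c.buf := by
      rw [← h]; exact Function.update_eq_self ι c.buf
    have h2 : (⟨c.st, Function.update c.buf ι [], flushMem [] c.mem⟩ : Conf I S X V) = c := by
      rw [h1]; rfl
    rw [h2]
    exact Relation.ReflTransGen.refl
  | append_singleton w' pr ih =>
    intro c h
    obtain ⟨x, v⟩ := pr
    have h1 : UpdStep c ⟨c.st, Function.update c.buf ι w', Function.update c.mem x v⟩ :=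
      UpdStep.mk c ι x v w' h
    have h2 := ih ⟨c.st, Function.update c.buf ι w', Function.update c.mem x v⟩
      (by simp)
    refine Relation.ReflTransGen.head h1 ?_
    show Upds _ _; convert h2 using 2
    · simp
    · simp [flushMem, List.foldr_append]

lemma upds_flushProc (c : Conf I S X V) (ι : I) : Upds c (flushProc c ι) :=
  upds_flush_aux ι (c.buf ι) c rfl

@[simp] lemma flushProc_st (c : Conf I S X V) (ι : I) : (flushProc c ι).st = c.st := rfl

lemma flushProc_buf_self (c : Conf I S X V) (ι : I) : (flushProc c ι).buf ι = [] := by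
  simp [flushProc]

lemma flushProc_buf_ne (c : Conf I S X V) {ι j : I} (h : j ≠ ι) :
    (flushProc c ι).buf j = c.buf j := by
  simp [flushProc, Function.update_of_ne h]

/-- Flush the buffers of all processes in the list. -/
def flushAll : Conf I S X V → List I → Conf I S X V
  | c, [] => c
  | c, ι :: l => flushAll (flushProc c ι) l

lemma upds_flushAll (c : Conf I S X V) (l : List I) : Upds c (flushAll c l) := by
  induction l generalizing c with
  | nil => exact Relation.ReflTransGen.refl
  | cons ι l ih => exact (upds_flushProc c ι).trans (ih _)

lemma flushAll_buf_not_mem (c : Conf I S X V) (l : List I) {j : I} (h : j ∉ l) :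
    (flushAll c l).buf j = c.buf j := by
  induction l generalizing c with
  | nil => rfl
  | cons ι l ih =>
    simp only [List.mem_cons, not_or] at h
    rw [flushAll, ih _ h.2, flushProc_buf_ne _ h.1]

lemma flushAll_buf_mem (c : Conf I S X V) (l : List I) {j : I} (h : j ∈ l) :
    (flushAll c l).buf j = [] := by
  induction l generalizing c with
  | nil => simp at h
  | cons ι l ih =>
    rw [flushAll]
    rcases List.mem_cons.mp h with h' | h'
    · by_cases hj : j ∈ l
      · exact ih _ hj
      · rw [flushAll_buf_not_mem _ _ hj, h', flushProc_buf_self]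
    · exact ih _ h'

variable [Fintype I]

/-- Flush all buffers of a configuration. -/
noncomputable def flushC (c : Conf I S X V) : Conf I S X V := flushAll c Finset.univ.toList

lemma upds_flushC (c : Conf I S X V) : Upds c (flushC c) := upds_flushAll _ _

lemma flushC_buf (c : Conf I S X V) (ι : I) : (flushC c).buf ι = [] :=
  flushAll_buf_mem _ _ (by simp)

lemma upds_st {c c' : Conf I S X V} (h : Upds c c') : c'.st = c.st := by
  induction h with
  | refl => rfl
  | tail _ hstep ih => cases hstep; exact ih

lemma move_upds {P : Program I S X V} {a b b' : Conf I S X V}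
    (h : Move P (true, true) a b) (h' : Upds b b') : Move P (true, true) a b' := by
  obtain ⟨c1, c2, h1, h2, h3⟩ := h
  refine ⟨c1, c2, h1, h2, ?_⟩
  simp only [OptUpds, if_true] at h3 ⊢
  exact h3.trans h'

lemma upds_move {P : Program I S X V} {a a' b : Conf I S X V}
    (h : Upds a' a) (h' : Move P (true, true) a b) : Move P (true, true) a' b := by
  obtain ⟨c1, c2, h1, h2, h3⟩ := h'
  refine ⟨c1, c2, ?_, h2, h3⟩
  simp only [OptUpds, if_true] at h1 ⊢
  exact h.trans h1

end AuxFlush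

section AuxStrat

variable {I S X V : Type*} [DecidableEq I] [DecidableEq X]

/-- Reconstruction of the history of the simulated play from the (reversed)
history of the actual play. -/
def reconRev (σ : List (Conf I S X V × Bool) → Conf I S X V × Bool → Conf I S X V × Bool)
    (p : Bool) : List (Conf I S X V × Bool) → List (Conf I S X V × Bool)
  | [] => []
  | [c] => [c]
  | c :: c' :: t =>
      (if c.2 = p then c else σ ((reconRev σ p t).reverse) c') :: reconRev σ p (c' :: t)

/-- The simulated play of the original strategy `σ` along a play `ρ` of the
flushed strategy. -/
def uSeq (σ : List (Conf I S X V × Bool) → Conf I S X V × Bool → Conf I S X V × Bool)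
    (p : Bool) (ρ : ℕ → Conf I S X V × Bool) : ℕ → Conf I S X V × Bool
  | 0 => ρ 0
  | (i + 1) =>
      if (ρ (i + 1)).2 = p then ρ (i + 1)
      else σ (List.ofFn fun j : Fin i => uSeq σ p ρ j) (ρ i)
  termination_by i => i
  decreasing_by exact Nat.lt_succ_of_lt j.isLt

lemma uSeq_zero (σ : List (Conf I S X V × Bool) → Conf I S X V × Bool → Conf I S X V × Bool)
    (p : Bool) (ρ : ℕ → Conf I S X V × Bool) : uSeq σ p ρ 0 = ρ 0 := by
  rw [uSeq]

lemma uSeq_succ (σ : List (Conf I S X V × Bool) → Conf I S X V × Bool → Conf I S X V × Bool)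
    (p : Bool) (ρ : ℕ → Conf I S X V × Bool) (i : ℕ) :
    uSeq σ p ρ (i + 1) =
      if (ρ (i + 1)).2 = p then ρ (i + 1)
      else σ (List.ofFn fun j : Fin i => uSeq σ p ρ j) (ρ i) := by
  rw [uSeq]

lemma ofFn_succ_reverse {C : Type*} (ρ : ℕ → C) (i : ℕ) :
    (List.ofFn fun j : Fin (i + 1) => ρ j).reverse
      = ρ i :: (List.ofFn fun j : Fin i => ρ j).reverse := by
  rw [List.ofFn_succ']
  simp [List.concat_eq_append]

lemma recon_eq (σ : List (Conf I S X V × Bool) → Conf I S X V × Bool → Conf I S X V × Bool)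
    (p : Bool) (ρ : ℕ → Conf I S X V × Bool) : ∀ i : ℕ,
    (reconRev σ p ((List.ofFn fun j : Fin i => ρ j).reverse)).reverse
      = List.ofFn fun j : Fin i => uSeq σ p ρ j := by
  have key : ∀ i : ℕ,
      ((reconRev σ p ((List.ofFn fun j : Fin i => ρ j).reverse)).reverse
        = List.ofFn fun j : Fin i => uSeq σ p ρ j) ∧
      ((reconRev σ p ((List.ofFn fun j : Fin (i+1) => ρ j).reverse)).reverse
        = List.ofFn fun j : Fin (i+1) => uSeq σ p ρ j) := by
    intro i
    induction i with
    | zero =>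
      constructor
      · simp [reconRev]
      · rw [ofFn_succ_reverse]
        simp only [List.ofFn_zero, List.reverse_nil, reconRev]
        simp [uSeq_zero, List.ofFn_succ]
    | succ i ih =>
      refine ⟨ih.2, ?_⟩
      rw [ofFn_succ_reverse ρ (i+1), ofFn_succ_reverse ρ i]
      simp only [reconRev, List.reverse_cons]
      rw [ih.1, ← ofFn_succ_reverse ρ i, ih.2, ← uSeq_succ σ p ρ i]
      rw [List.ofFn_succ' (f := fun j : Fin (i+2) => uSeq σ p ρ j)]
      simp [List.concat_eq_append]
  exact fun i => (key i).1
end AuxStrat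

/-- In the TSO game where both players may update before and after their own moves:
if `c0` is winning for a player, that player has a winning strategy from `c0` after
every one of whose moves all buffers are empty; consequently, in any play from `c0`
consistent with such strategies of both players, from the second configuration on the
total buffer content has at most one message. -/
theorem statement7 {I S X V : Type} [DecidableEq I] [DecidableEq X] [Fintype I]
    (P : Program I S X V) (SF : Set S)
    (G : SGame (Conf I S X V × Bool))
    (hG : G = tsoGame P (true, true) (true, true) SF)
    (c0 : Conf I S X V × Bool) :
    (∀ p : Bool,
      G.Wins (ownOf p) (winPlayOf G p) c0 →
      ∃ σ : List (Conf I S X V × Bool) → Conf I S X V × Bool → Conf I S X V × Bool,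
        G.WinningStrat (ownOf p) (winPlayOf G p) σ c0 ∧
        ∀ h c, ownOf p c → ∀ ι, (σ h c).1.buf ι = []) ∧
    (∀ σA σB : List (Conf I S X V × Bool) → Conf I S X V × Bool → Conf I S X V × Bool,
      G.ValidStrat (ownOf true) σA → G.ValidStrat (ownOf false) σB →
      (∀ h c, ownOf true c → ∀ ι, (σA h c).1.buf ι = []) →
      (∀ h c, ownOf false c → ∀ ι, (σB h c).1.buf ι = []) →
      ∀ ρ : ℕ → Conf I S X V × Bool, ρ 0 = c0 → G.IsPlay ρ →
        SGame.Consistent (ownOf true) σA ρ → SGame.Consistent (ownOf false) σB ρ →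
        ∀ i, 1 ≤ i → totalBuf (ρ i).1 ≤ 1) := by
  subst hG
  have step_snd : ∀ c c' : Conf I S X V × Bool,
      (tsoGame P (true, true) (true, true) SF).step c c' → c'.2 = !c.2 := by
    rintro c c' (⟨h1, h2, -⟩ | ⟨h1, h2, -⟩) <;> simp [h1, h2]
  constructor
  · rintro p ⟨σ, ⟨hval, hwin⟩⟩
    refine ⟨fun h c =>
      ((flushC (σ ((reconRev σ p h.reverse).reverse) c).1,
        (σ ((reconRev σ p h.reverse).reverse) c).2)), ⟨?_, ?_⟩, ?_⟩
    · -- validity of the flushed strategy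
      intro h c hc
      have hs := hval ((reconRev σ p h.reverse).reverse) c hc
      rcases hs with ⟨h1, h2, h3⟩ | ⟨h1, h2, h3⟩
      · exact Or.inl ⟨h1, h2, move_upds h3 (upds_flushC _)⟩
      · exact Or.inr ⟨h1, h2, move_upds h3 (upds_flushC _)⟩
    · -- flushed strategy is winning
      intro ρ h0 hplay hcons
      have hInv : ∀ i, (uSeq σ p ρ i).2 = (ρ i).2 ∧ Upds (uSeq σ p ρ i).1 (ρ i).1 ∧
          ((ρ i).2 = p → uSeq σ p ρ i = ρ i) := by
        intro i
        induction i with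
        | zero =>
          rw [uSeq_zero]
          exact ⟨rfl, Relation.ReflTransGen.refl, fun _ => rfl⟩
        | succ i ih =>
          by_cases hp : (ρ i).2 = p
          · have hsnd := step_snd _ _ (hplay i)
            have hnp : ¬ ((ρ (i + 1)).2 = p) := by
              rw [hsnd, hp]; cases p <;> simp
            have hu1 : uSeq σ p ρ (i + 1)
                = σ (List.ofFn fun j : Fin i => uSeq σ p ρ j) (ρ i) := by
              rw [uSeq_succ, if_neg hnp]
            have hcρ := hcons i hp
            simp only [recon_eq σ p ρ] at hcρ
            rw [← hu1] at hcρ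
            refine ⟨by rw [hcρ], by rw [hcρ]; exact upds_flushC _, fun habs => absurd habs hnp⟩
          · have hsnd := step_snd _ _ (hplay i)
            have hp1 : (ρ (i + 1)).2 = p := by
              rw [hsnd]; cases hq : (ρ i).2 <;> cases p <;> simp_all
            have hu1 : uSeq σ p ρ (i + 1) = ρ (i + 1) := by
              rw [uSeq_succ, if_pos hp1]
            rw [hu1]
            exact ⟨rfl, Relation.ReflTransGen.refl, fun _ => rfl⟩
      have hstep : ∀ i, (tsoGame P (true, true) (true, true) SF).step
            (uSeq σ p ρ i) (uSeq σ p ρ (i + 1)) ∧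
          ((uSeq σ p ρ i).2 = p → uSeq σ p ρ (i + 1)
            = σ (List.ofFn fun j : Fin i => uSeq σ p ρ j) (uSeq σ p ρ i)) := by
        intro i
        obtain ⟨h2eq, hupd, hown⟩ := hInv i
        by_cases hp : (ρ i).2 = p
        · have hui := hown hp
          have hsnd := step_snd _ _ (hplay i)
          have hnp : ¬ ((ρ (i + 1)).2 = p) := by
            rw [hsnd, hp]; cases p <;> simp
          have hu1 : uSeq σ p ρ (i + 1)
              = σ (List.ofFn fun j : Fin i => uSeq σ p ρ j) (ρ i) := by
            rw [uSeq_succ, if_neg hnp]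
          constructor
          · rw [hu1, ← hui]
            exact hval _ (uSeq σ p ρ i) (show (uSeq σ p ρ i).2 = p by rw [hui]; exact hp)
          · intro _; rw [hu1, hui]
        · have hsnd := step_snd _ _ (hplay i)
          have hp1 : (ρ (i + 1)).2 = p := by
            rw [hsnd]; cases hq : (ρ i).2 <;> cases p <;> simp_all
          have hu1 : uSeq σ p ρ (i + 1) = ρ (i + 1) := by
            rw [uSeq_succ, if_pos hp1]
          constructor
          · rcases hplay i with ⟨ha, hb, hm⟩ | ⟨ha, hb, hm⟩
            · exact Or.inl ⟨h2eq.trans ha, by rw [hu1]; exact hb,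
                by rw [hu1]; exact upds_move hupd hm⟩
            · exact Or.inr ⟨h2eq.trans ha, by rw [hu1]; exact hb,
                by rw [hu1]; exact upds_move hupd hm⟩
          · intro habs; exact absurd (h2eq.symm.trans habs) hp
      have hu0 : uSeq σ p ρ 0 = c0 := by rw [uSeq_zero, h0]
      have hwu := hwin (uSeq σ p ρ) hu0 (fun i => (hstep i).1) (fun i hi => (hstep i).2 hi)
      have hfin : ∀ i, (tsoGame P (true, true) (true, true) SF).final (ρ i) ↔
          (tsoGame P (true, true) (true, true) SF).final (uSeq σ p ρ i) := by
        intro i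
        obtain ⟨h2eq, hupd, -⟩ := hInv i
        have hst := upds_st hupd
        constructor
        · rintro ⟨ha, ι, hb⟩
          exact ⟨h2eq.trans ha, ι, by rw [← hst]; exact hb⟩
        · rintro ⟨ha, ι, hb⟩
          exact ⟨h2eq.symm.trans ha, ι, by rw [hst]; exact hb⟩
      have hBW : (tsoGame P (true, true) (true, true) SF).BWins ρ ↔
          (tsoGame P (true, true) (true, true) SF).BWins (uSeq σ p ρ) :=
        exists_congr fun i => hfin i
      cases p with
      | false =>
        simp only [winPlayOf, if_neg (by simp : ¬ (false = true))] at hwu ⊢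
        exact hBW.mpr hwu
      | true =>
        simp only [winPlayOf, if_pos rfl] at hwu ⊢
        exact fun hb => hwu (hBW.mp hb)
    · -- all buffers empty after every own move
      intro h c _ ι
      exact flushC_buf _ ι
  · intro σA σB hvA hvB hbA hbB ρ h0 hplay hcA hcB i hi
    obtain ⟨j, rfl⟩ : ∃ j, i = j + 1 := ⟨i - 1, by omega⟩
    cases hb : (ρ j).2 with
    | false =>
      rw [hcB j hb]
      simp [totalBuf, hbB _ _ hb]
    | true =>
      rw [hcA j hb]
      simp [totalBuf, hbA _ _ hb]

end TSOGames
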